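/- For every even integer n ≥ 12, if G is a triangle-free simple graph on n vertices and x₁x₂ is an edge of G, then the number of cycles of G containing the edge x₁x₂ is at most 2.44·(((n−2)/2)!)². -/

import Mathlib

open SimpleGraph

/-- The number of cycles of `G` (as distinct cycle subgraphs) that contain the edge `xy`. -/
noncomputable def cycleCountThroughEdge {V : Type*} (G : SimpleGraph V) (x y : V) : ℕ :=
  Nat.card {H : G.Subgraph //
    (∃ (u : V) (w : G.Walk u u), w.IsCycle ∧ w.toSubgraph = H) ∧ H.Adj x y}

namespace Stmt17Aux


def Q : ℕ → ℕ
  | 0 => 1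
  | n + 1 => (n + 1) ^ 2 * Q n + 1

lemma Q_pos (n : ℕ) : 1 ≤ Q n := by
  cases n with
  | zero => simp [Q]
  | succ n => simp [Q]

def phi0 : ℕ → ℕ → ℕ
  | 0, _ => 0
  | 1, b => min b 1
  | 2, b => min b 2
  | 3, b => 2 * min b 2
  | 4, b => 4 * min b 2 + (if 3 ≤ b then 1 else 0)
  | 5, b => 9 * min b 3
  | a + 6, b =>
    if (a + 6) % 2 = 0 then ((a + 6) / 2) * Q ((a + 6) / 2 - 1) * min b ((a + 6) / 2)
    else Q ((a + 6) / 2) * min b ((a + 6) / 2 + 1)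

def phi1 : ℕ → ℕ → ℕ
  | 0, _ => 1
  | 1, _ => 1
  | 2, b => 1 + min b 1
  | 3, b => 1 + 2 * min b 1
  | 4, b => 1 + 4 * min b 2
  | 5, b => 1 + 9 * min b 2 + 6 * (if 3 ≤ b then 1 else 0)
  | a + 6, b =>
    if (a + 6) % 2 = 0 then 1 + ((a + 6) / 2) * Q ((a + 6) / 2 - 1) * min b ((a + 6) / 2)
    else 1 + (Q ((a + 6) / 2) - 1) * min b ((a + 6) / 2 + 1)

lemma div2 (k : ℕ) : (2 * k + 6) / 2 = k + 3 := by omega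
lemma div2' (k : ℕ) : (2 * k + 7) / 2 = k + 3 := by omega

lemma phi0_even (k b : ℕ) : phi0 (2 * k + 6) b = (k + 3) * Q (k + 2) * min b (k + 3) := by
  show (if (2 * k + 6) % 2 = 0 then ((2 * k + 6) / 2) * Q ((2 * k + 6) / 2 - 1) * min b ((2 * k + 6) / 2) else _) = _
  rw [if_pos (by omega), div2]
  norm_num

lemma phi0_odd (k b : ℕ) : phi0 (2 * k + 7) b = Q (k + 3) * min b (k + 4) := by
  show (if (2 * k + 7) % 2 = 0 then _ else Q ((2 * k + 7) / 2) * min b ((2 * k + 7) / 2 + 1)) = _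
  rw [if_neg (by omega), div2']

lemma phi1_even (k b : ℕ) : phi1 (2 * k + 6) b = 1 + (k + 3) * Q (k + 2) * min b (k + 3) := by
  show (if (2 * k + 6) % 2 = 0 then 1 + ((2 * k + 6) / 2) * Q ((2 * k + 6) / 2 - 1) * min b ((2 * k + 6) / 2) else _) = _
  rw [if_pos (by omega), div2]
  norm_num

lemma phi1_odd (k b : ℕ) : phi1 (2 * k + 7) b = 1 + (Q (k + 3) - 1) * min b (k + 4) := by
  show (if (2 * k + 7) % 2 = 0 then _ else 1 + (Q ((2 * k + 7) / 2) - 1) * min b ((2 * k + 7) / 2 + 1)) = _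
  rw [if_neg (by omega), div2']

lemma one_le_phi1 (a b : ℕ) : 1 ≤ phi1 a b := by
  match a with
  | 0 | 1 | 2 | 3 | 4 => simp only [phi1]; omega
  | 5 => simp only [phi1]; split <;> omega
  | a + 6 => show 1 ≤ if _ then _ else _; split <;> exact Nat.le_add_right 1 _

lemma phi0_mono {a b b' : ℕ} (h : b ≤ b') : phi0 a b ≤ phi0 a b' := by
  match a with
  | 0 => exact le_refl _
  | 1 | 2 | 3 | 5 => simp only [phi0]; omega
  | 4 => simp only [phi0]; split <;> split <;> omega
  | a + 6 =>
    show (if _ then _ else _) ≤ (if _ then _ else _)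
    split
    · exact Nat.mul_le_mul_left _ (by omega)
    · exact Nat.mul_le_mul_left _ (by omega)

lemma phi1_mono {a b b' : ℕ} (h : b ≤ b') : phi1 a b ≤ phi1 a b' := by
  match a with
  | 0 | 1 => exact le_refl _
  | 2 | 3 | 4 => simp only [phi1]; omega
  | 5 => simp only [phi1]; split <;> split <;> omega
  | a + 6 =>
    show (if _ then _ else _) ≤ (if _ then _ else _)
    split
    · exact Nat.add_le_add_left (Nat.mul_le_mul_left _ (by omega)) _
    · exact Nat.add_le_add_left (Nat.mul_le_mul_left _ (by omega)) _

/-- Key recursive inequality, state 1 (current vertex adjacent to `x₁`). -/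
lemma ineq1 (a c : ℕ) (ha : 1 ≤ a) (hc : c ≤ a) :
    1 + c * phi0 (a - 1) (a - c) ≤ phi1 a c := by
  rcases Nat.lt_or_ge a 7 with h7 | h7
  · interval_cases a <;> interval_cases c <;> decide
  · rcases Nat.even_or_odd a with ⟨j, hj⟩ | ⟨j, hj⟩
    · -- a = 2k+8
      obtain ⟨k, rfl⟩ : ∃ k, a = 2 * k + 8 := ⟨j - 4, by omega⟩
      have e1 : 2 * k + 8 - 1 = 2 * k + 7 := by omega
      rw [e1, phi0_odd]
      have e2 : 2 * k + 8 = 2 * (k + 1) + 6 := by ring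
      rw [e2, phi1_even]
      have hQ : 1 ≤ Q (k + 3) := Q_pos _
      rcases le_or_gt c (k + 4) with hle | hgt
      · have m1 : min (2 * (k + 1) + 6 - c) (k + 4) = k + 4 := by omega
        have m2 : min c (k + 1 + 3) = c := by omega
        rw [m1, m2]
        have : c * (Q (k + 3) * (k + 4)) = (k + 1 + 3) * Q (k + 1 + 2) * c := by ring_nf
        omega
      · have m1 : min (2 * (k + 1) + 6 - c) (k + 4) = 2 * k + 8 - c := by omega
        have m2 : min c (k + 1 + 3) = k + 4 := by omega
        rw [m1, m2]
        have key : c * (2 * k + 8 - c) ≤ (k + 4) * (k + 4) := by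
          zify [show c ≤ 2 * k + 8 by omega]
          nlinarith [sq_nonneg ((c:ℤ) - (k + 4))]
        calc 1 + c * (Q (k + 3) * (2 * k + 8 - c))
            = 1 + Q (k + 3) * (c * (2 * k + 8 - c)) := by ring_nf
          _ ≤ 1 + Q (k + 3) * ((k + 4) * (k + 4)) := by
              exact Nat.add_le_add_left (Nat.mul_le_mul_left _ key) _
          _ = 1 + (k + 1 + 3) * Q (k + 1 + 2) * (k + 4) := by ring_nf
    · -- a = 2k+7
      obtain ⟨k, rfl⟩ : ∃ k, a = 2 * k + 7 := ⟨j - 3, by omega⟩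
      have e1 : 2 * k + 7 - 1 = 2 * k + 6 := by omega
      rw [e1, phi0_even, phi1_odd]
      have hQ : Q (k + 3) = (k + 3) ^ 2 * Q (k + 2) + 1 := rfl
      have hq : 1 ≤ Q (k + 2) := Q_pos _
      rcases le_or_gt c (k + 4) with hle | hgt
      · have m1 : min (2 * k + 7 - c) (k + 3) = k + 3 := by omega
        have m2 : min c (k + 4) = c := by omega
        rw [m1, m2]
        have hQm : Q (k + 3) - 1 = (k + 3) ^ 2 * Q (k + 2) := by
          rw [hQ, Nat.add_sub_cancel]
        rw [hQm]
        have : c * ((k + 3) * Q (k + 2) * (k + 3)) = (k + 3) ^ 2 * Q (k + 2) * c := by ring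
        omega
      · have m1 : min (2 * k + 7 - c) (k + 3) = 2 * k + 7 - c := by omega
        have m2 : min c (k + 4) = k + 4 := by omega
        rw [m1, m2]
        have key : c * (2 * k + 7 - c) ≤ (k + 3) * (k + 4) := by
          zify [show c ≤ 2 * k + 7 by omega]
          nlinarith [mul_le_mul (show (1:ℤ) ≤ (c:ℤ) - (k + 4) by omega)
            (show (2:ℤ) ≤ (c:ℤ) - (k + 3) by omega) (by omega) (by omega)]
        have h2 : 1 + (Q (k + 3) - 1) * (k + 4) = 1 + (k + 3) ^ 2 * Q (k + 2) * (k + 4) := by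
          rw [hQ, Nat.add_sub_cancel]
        rw [h2]
        calc 1 + c * ((k + 3) * Q (k + 2) * (2 * k + 7 - c))
            = 1 + (k + 3) * Q (k + 2) * (c * (2 * k + 7 - c)) := by ring_nf
          _ ≤ 1 + (k + 3) * Q (k + 2) * ((k + 3) * (k + 4)) := by
              exact Nat.add_le_add_left (Nat.mul_le_mul_left _ key) _
          _ = 1 + (k + 3) ^ 2 * Q (k + 2) * (k + 4) := by ring_nf

/-- Key recursive inequality, state 0 (current vertex not adjacent to `x₁`). -/
lemma ineq0 (a c : ℕ) (ha : 1 ≤ a) (hc : c ≤ a) :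
    c * max (phi0 (a - 1) (a - c)) (phi1 (a - 1) (a - c)) ≤ phi0 a c := by
  rcases Nat.lt_or_ge a 7 with h7 | h7
  · interval_cases a <;> interval_cases c <;> decide
  · rcases Nat.even_or_odd a with ⟨j, hj⟩ | ⟨j, hj⟩
    · -- a = 2k+8, inner odd 2k+7
      obtain ⟨k, rfl⟩ : ∃ k, a = 2 * k + 8 := ⟨j - 4, by omega⟩
      have e1 : 2 * k + 8 - 1 = 2 * k + 7 := by omega
      have e2 : 2 * k + 8 = 2 * (k + 1) + 6 := by ring
      rw [e1, phi0_odd, phi1_odd, e2, phi0_even]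
      have hq : 1 ≤ Q (k + 3) := Q_pos _
      rcases Nat.eq_or_lt_of_le hc with hca | hlt
      · -- c = a : inner min is 0
        have m0 : min (2 * k + 8 - c) (k + 4) = 0 := by omega
        rw [show (2 * (k+1) + 6 - c) = 2 * k + 8 - c from by ring_nf, m0]
        simp only [Nat.mul_zero, Nat.zero_add]
        have m2 : min c (k + 1 + 3) = k + 4 := by omega
        rw [m2, Nat.max_eq_right (by omega)]
        have h8 : 2 * k + 8 ≤ (k + 4) * (k + 4) := by nlinarith
        calc c * (1 + (Q (k + 3) - 1) * 0) = c := by ring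
          _ = 2 * k + 8 := hca
          _ ≤ (k + 4) * (k + 4) := h8
          _ ≤ (k + 4) * (k + 4) * Q (k + 3) := Nat.le_mul_of_pos_right _ (Q_pos _)
          _ = (k + 1 + 3) * Q (k + 1 + 2) * (k + 4) := by ring
      · have hc' : c ≤ 2 * k + 7 := by omega
        have hb1 : 1 ≤ min (2 * k + 8 - c) (k + 4) := by omega
        have hmax : max (Q (k + 3) * min (2 * k + 8 - c) (k + 4))
            (1 + (Q (k + 3) - 1) * min (2 * k + 8 - c) (k + 4))
            = Q (k + 3) * min (2 * k + 8 - c) (k + 4) := by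
          apply Nat.max_eq_left
          rw [Nat.sub_mul, one_mul]
          have hM : min (2 * k + 8 - c) (k + 4) ≤ Q (k + 3) * min (2 * k + 8 - c) (k + 4) :=
            Nat.le_mul_of_pos_left _ (Q_pos _)
          omega
        rw [show (2 * (k+1) + 6 - c) = 2 * k + 8 - c from by ring_nf, hmax]
        rcases le_or_gt c (k + 4) with hle | hgt
        · have m1 : min (2 * k + 8 - c) (k + 4) = k + 4 := by omega
          have m2 : min c (k + 1 + 3) = c := by omega
          rw [m1, m2]
          have : c * (Q (k + 3) * (k + 4)) = (k + 1 + 3) * Q (k + 1 + 2) * c := by ring_nf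
          omega
        · have m1 : min (2 * k + 8 - c) (k + 4) = 2 * k + 8 - c := by omega
          have m2 : min c (k + 1 + 3) = k + 4 := by omega
          rw [m1, m2]
          have key : c * (2 * k + 8 - c) ≤ (k + 4) * (k + 4) := by
            zify [show c ≤ 2 * k + 8 by omega]
            nlinarith [sq_nonneg ((c:ℤ) - (k + 4))]
          calc c * (Q (k + 3) * (2 * k + 8 - c))
              = Q (k + 3) * (c * (2 * k + 8 - c)) := by ring_nf
            _ ≤ Q (k + 3) * ((k + 4) * (k + 4)) := Nat.mul_le_mul_left _ key
            _ = (k + 1 + 3) * Q (k + 1 + 2) * (k + 4) := by ring_nf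
    · -- a = 2k+7, inner even 2k+6
      obtain ⟨k, rfl⟩ : ∃ k, a = 2 * k + 7 := ⟨j - 3, by omega⟩
      have e1 : 2 * k + 7 - 1 = 2 * k + 6 := by omega
      rw [e1, phi0_even, phi1_even, phi0_odd]
      have hq : 1 ≤ Q (k + 2) := Q_pos _
      have hQ : Q (k + 3) = (k + 3) ^ 2 * Q (k + 2) + 1 := rfl
      have hmax : max ((k + 3) * Q (k + 2) * min (2 * k + 7 - c) (k + 3))
          (1 + (k + 3) * Q (k + 2) * min (2 * k + 7 - c) (k + 3))
          = 1 + (k + 3) * Q (k + 2) * min (2 * k + 7 - c) (k + 3) :=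
        Nat.max_eq_right (Nat.le_add_left _ _)
      rw [hmax]
      rcases le_or_gt c (k + 4) with hle | hgt
      · have m1 : min (2 * k + 7 - c) (k + 3) = k + 3 := by omega
        have m2 : min c (k + 4) = c := by omega
        rw [m1, m2]
        have h1 : c * (1 + (k + 3) * Q (k + 2) * (k + 3)) = c * Q (k + 3) := by
          rw [hQ]; ring
        have h2 : Q (k + 3) * c = c * Q (k + 3) := by ring
        omega
      · have m1 : min (2 * k + 7 - c) (k + 3) = 2 * k + 7 - c := by omega
        have m2 : min c (k + 4) = k + 4 := by omega
        rw [m1, m2]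
        have key : c * (2 * k + 7 - c) + 2 ≤ (k + 3) * (k + 4) := by
          zify [show c ≤ 2 * k + 7 by omega]
          nlinarith [mul_le_mul (show (1:ℤ) ≤ (c:ℤ) - (k + 4) by omega)
            (show (2:ℤ) ≤ (c:ℤ) - (k + 3) by omega) (by omega) (by omega)]
        -- c * (1 + X * (2k+7-c)) ≤ Q(k+3) * (k+4)  where X = (k+3) * Q(k+2)
        have expand : Q (k + 3) * (k + 4) = (k + 3) ^ 2 * Q (k + 2) * (k + 4) + (k + 4) := by
          rw [hQ]; ring
        rw [expand]
        have step : (k + 3) * Q (k + 2) * (c * (2 * k + 7 - c)) + 2 * ((k + 3) * Q (k + 2))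
            ≤ (k + 3) ^ 2 * Q (k + 2) * (k + 4) := by
          calc (k + 3) * Q (k + 2) * (c * (2 * k + 7 - c)) + 2 * ((k + 3) * Q (k + 2))
              = (k + 3) * Q (k + 2) * (c * (2 * k + 7 - c) + 2) := by ring
            _ ≤ (k + 3) * Q (k + 2) * ((k + 3) * (k + 4)) := Nat.mul_le_mul_left _ key
            _ = (k + 3) ^ 2 * Q (k + 2) * (k + 4) := by ring
        have hc2 : c ≤ k + 4 + 2 * ((k + 3) * Q (k + 2)) := by nlinarith
        calc c * (1 + (k + 3) * Q (k + 2) * (2 * k + 7 - c))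
            = c + (k + 3) * Q (k + 2) * (c * (2 * k + 7 - c)) := by ring
          _ ≤ (k + 3) ^ 2 * Q (k + 2) * (k + 4) + (k + 4) := by omega

/-- Value at the root. -/
lemma phi1_top (k : ℕ) : phi1 (2 * (k + 3)) (2 * (k + 3)) = Q (k + 3) := by
  have : 2 * (k + 3) = 2 * k + 6 := by ring
  rw [this, phi1_even]
  have m : min (2 * k + 6) (k + 3) = k + 3 := by omega
  rw [m]
  show _ = (k + 3) ^ 2 * Q (k + 2) + 1
  ring

/-- The numeric bound on `Q`. -/
lemma Q_le (m : ℕ) (hm : 3 ≤ m) : 100 * Q m + 100 ≤ 244 * (Nat.factorial m) ^ 2 := by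
  induction m, hm using Nat.le_induction with
  | base => decide
  | succ m hm ih =>
    have hs : 2 ≤ (m + 1) ^ 2 := by nlinarith
    have h1 : 100 * Q (m + 1) + 100 = (m + 1) ^ 2 * (100 * Q m) + 200 := by
      show 100 * ((m + 1) ^ 2 * Q m + 1) + 100 = _
      ring
    rw [h1]
    have h2 : (m + 1) ^ 2 * (100 * Q m) + 200 ≤ (m + 1) ^ 2 * (100 * Q m + 100) := by
      rw [Nat.mul_add]
      have : 200 ≤ (m + 1) ^ 2 * 100 := by nlinarith
      omega
    calc (m + 1) ^ 2 * (100 * Q m) + 200 ≤ (m + 1) ^ 2 * (100 * Q m + 100) := h2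
      _ ≤ (m + 1) ^ 2 * (244 * (Nat.factorial m) ^ 2) := Nat.mul_le_mul_left _ ih
      _ = 244 * (Nat.factorial (m + 1)) ^ 2 := by
          rw [Nat.factorial_succ]; ring


variable {V : Type} [Fintype V]


open scoped Classical in
noncomputable def TT (G : SimpleGraph V) (x₁ : V) : ℕ → Finset V → V → Finset (List V)
  | 0, _, v => if G.Adj v x₁ then {([] : List V)} else ∅
  | k + 1, U, v =>
    (if G.Adj v x₁ then {([] : List V)} else ∅) ∪
      (U.filter (fun u => G.Adj v u)).biUnion
        (fun u => (TT G x₁ k (U.erase u) u).image (fun L => u :: L))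

open scoped Classical in
lemma card_TT_le (G : SimpleGraph V) (x₁ : V) (htf : G.CliqueFree 3) (k : ℕ) :
    ∀ (U : Finset V) (v : V),
    (TT G x₁ k U v).card ≤
      if G.Adj v x₁ then phi1 U.card (U.filter (fun u => G.Adj v u)).card
      else phi0 U.card (U.filter (fun u => G.Adj v u)).card := by
  induction k with
  | zero =>
    intro U v
    simp only [TT]
    split
    · simp only [Finset.card_singleton]
      exact one_le_phi1 _ _
    · simp
  | succ k ih =>
    intro U v
    simp only [TT]
    set a := U.card with ha
    set c := (U.filter (fun u => G.Adj v u)).card with hc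
    have hca : c ≤ a := Finset.card_filter_le _ _
    -- the per-child bound
    have key : ∀ u ∈ U.filter (fun u => G.Adj v u),
        ((TT G x₁ k (U.erase u) u).image (fun L => u :: L)).card ≤
          max (phi0 (a - 1) (a - c)) (phi1 (a - 1) (a - c)) := by
      intro u hu
      obtain ⟨huU, hvu⟩ := Finset.mem_filter.mp hu
      have hacard : (U.erase u).card = a - 1 := by rw [Finset.card_erase_of_mem huU]
      have hsub : (U.erase u).filter (fun w => G.Adj u w) ⊆
          U \ (U.filter (fun w => G.Adj v w)) := by
        intro w hw
        obtain ⟨hwe, huw⟩ := Finset.mem_filter.mp hw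
        obtain ⟨hwu, hwU⟩ := Finset.mem_erase.mp hwe
        refine Finset.mem_sdiff.mpr ⟨hwU, fun hmem => ?_⟩
        have hvw : G.Adj v w := (Finset.mem_filter.mp hmem).2
        exact htf {v, u, w} (SimpleGraph.is3Clique_triple_iff.mpr ⟨hvu, hvw, huw⟩)
      have hinner : ((U.erase u).filter (fun w => G.Adj u w)).card ≤ a - c := by
        calc ((U.erase u).filter (fun w => G.Adj u w)).card
            ≤ (U \ (U.filter (fun w => G.Adj v w))).card := Finset.card_le_card hsub
          _ = a - c := by rw [Finset.card_sdiff_of_subset (Finset.filter_subset _ _)]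
      calc ((TT G x₁ k (U.erase u) u).image (fun L => u :: L)).card
          ≤ (TT G x₁ k (U.erase u) u).card := Finset.card_image_le
        _ ≤ _ := ih (U.erase u) u
        _ ≤ max (phi0 (a - 1) (a - c)) (phi1 (a - 1) (a - c)) := by
            split
            · rw [hacard]; exact le_trans (phi1_mono hinner) (le_max_right _ _)
            · rw [hacard]; exact le_trans (phi0_mono hinner) (le_max_left _ _)
    have hbi : ((U.filter (fun u => G.Adj v u)).biUnion
        (fun u => (TT G x₁ k (U.erase u) u).image (fun L => u :: L))).card ≤
        c * max (phi0 (a - 1) (a - c)) (phi1 (a - 1) (a - c)) := by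
      calc ((U.filter (fun u => G.Adj v u)).biUnion _).card
          ≤ ∑ u ∈ U.filter (fun u => G.Adj v u),
            ((TT G x₁ k (U.erase u) u).image (fun L => u :: L)).card :=
          Finset.card_biUnion_le
        _ ≤ c * max (phi0 (a - 1) (a - c)) (phi1 (a - 1) (a - c)) := by
            rw [hc]
            simpa using Finset.sum_le_card_nsmul _ _ _ key
    rcases Nat.eq_zero_or_pos c with hc0 | hcpos
    · -- no children: biUnion over empty-ish; crude bound
      have hempty : U.filter (fun u => G.Adj v u) = ∅ :=
        Finset.card_eq_zero.mp (hc.symm.trans hc0)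
      rw [hempty]
      simp only [Finset.biUnion_empty, Finset.union_empty]
      split
      · simp only [Finset.card_singleton]; exact one_le_phi1 _ _
      · simp
    · have ha1 : 1 ≤ a := le_trans hcpos hca
      refine le_trans (Finset.card_union_le _ _) ?_
      split
      · -- v adjacent to x₁ : all children are in state 0
        have hstate : ∀ u ∈ U.filter (fun u => G.Adj v u), ¬ G.Adj u x₁ := by
          intro u hu hux
          obtain ⟨huU, hvu⟩ := Finset.mem_filter.mp hu
          rename_i hvx
          exact htf {v, u, x₁} (SimpleGraph.is3Clique_triple_iff.mpr ⟨hvu, hvx, hux⟩)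
        have key0 : ∀ u ∈ U.filter (fun u => G.Adj v u),
            ((TT G x₁ k (U.erase u) u).image (fun L => u :: L)).card ≤
              phi0 (a - 1) (a - c) := by
          intro u hu
          obtain ⟨huU, hvu⟩ := Finset.mem_filter.mp hu
          have hacard : (U.erase u).card = a - 1 := by rw [Finset.card_erase_of_mem huU]
          have hsub : (U.erase u).filter (fun w => G.Adj u w) ⊆
              U \ (U.filter (fun w => G.Adj v w)) := by
            intro w hw
            obtain ⟨hwe, huw⟩ := Finset.mem_filter.mp hw
            obtain ⟨hwu, hwU⟩ := Finset.mem_erase.mp hwe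
            refine Finset.mem_sdiff.mpr ⟨hwU, fun hmem => ?_⟩
            have hvw : G.Adj v w := (Finset.mem_filter.mp hmem).2
            exact htf {v, u, w} (SimpleGraph.is3Clique_triple_iff.mpr ⟨hvu, hvw, huw⟩)
          have hinner : ((U.erase u).filter (fun w => G.Adj u w)).card ≤ a - c := by
            calc ((U.erase u).filter (fun w => G.Adj u w)).card
                ≤ (U \ (U.filter (fun w => G.Adj v w))).card := Finset.card_le_card hsub
              _ = a - c := by rw [Finset.card_sdiff_of_subset (Finset.filter_subset _ _)]
          have := ih (U.erase u) u
          rw [if_neg (hstate u hu)] at this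
          calc ((TT G x₁ k (U.erase u) u).image (fun L => u :: L)).card
              ≤ (TT G x₁ k (U.erase u) u).card := Finset.card_image_le
            _ ≤ phi0 (U.erase u).card ((U.erase u).filter (fun w => G.Adj u w)).card := this
            _ ≤ phi0 (a - 1) (a - c) := by
                rw [hacard]; exact phi0_mono hinner
        have hbi0 : ((U.filter (fun u => G.Adj v u)).biUnion
            (fun u => (TT G x₁ k (U.erase u) u).image (fun L => u :: L))).card ≤
            c * phi0 (a - 1) (a - c) := by
          calc ((U.filter (fun u => G.Adj v u)).biUnion _).card
              ≤ ∑ u ∈ U.filter (fun u => G.Adj v u),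
                ((TT G x₁ k (U.erase u) u).image (fun L => u :: L)).card :=
              Finset.card_biUnion_le
            _ ≤ c * phi0 (a - 1) (a - c) := by
                rw [hc]
                simpa using Finset.sum_le_card_nsmul _ _ _ key0
        simp only [Finset.card_singleton]
        exact le_trans (Nat.add_le_add_left hbi0 1) (ineq1 a c ha1 hca)
      · simp only [Finset.card_empty, Nat.zero_add]
        exact le_trans hbi (ineq0 a c ha1 hca)

open scoped Classical in
lemma mem_TT (G : SimpleGraph V) (x₁ : V) (k : ℕ) (U : Finset V) (v : V) (L : List V)
    (h1 : (v :: L).Chain' G.Adj) (h2 : L.Nodup) (h3 : ∀ x ∈ L, x ∈ U)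
    (h4 : G.Adj ((v :: L).getLast (List.cons_ne_nil _ _)) x₁) (hk : L.length ≤ k) :
    L ∈ TT G x₁ k U v := by
  induction k generalizing U v L with
  | zero =>
    have : L = [] := List.length_eq_zero_iff.mp (Nat.le_zero.mp hk)
    subst this
    simp only [TT]
    rw [if_pos (by simpa using h4)]
    simp
  | succ k ih =>
    match L with
    | [] =>
      simp only [TT]
      apply Finset.mem_union_left
      rw [if_pos (by simpa using h4)]
      simp
    | u :: L' =>
      simp only [TT]
      apply Finset.mem_union_right
      have hvu : G.Adj v u := (List.isChain_cons_cons.mp h1).1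
      have hu : u ∈ U := h3 u (by simp)
      apply Finset.mem_biUnion.mpr
      refine ⟨u, Finset.mem_filter.mpr ⟨hu, hvu⟩, ?_⟩
      apply Finset.mem_image.mpr
      refine ⟨L', ?_, rfl⟩
      have hL'nd : L'.Nodup := (List.nodup_cons.mp h2).2
      have huL' : u ∉ L' := (List.nodup_cons.mp h2).1
      apply ih
      · exact (List.isChain_cons_cons.mp h1).2
      · exact hL'nd
      · intro x hx
        exact Finset.mem_erase.mpr ⟨fun hxu => huL' (hxu ▸ hx), h3 x (by simp [hx])⟩
      · rw [← List.getLast_cons (l := u :: L') (by simp)]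
        exact h4
      · simpa using hk



/-- A walk is determined by its support. -/
lemma walk_eq_of_support_eq {G : SimpleGraph V} :
    ∀ {a b : V} (p q : G.Walk a b), p.support = q.support → p = q := by
  intro a b p
  induction p with
  | nil =>
    intro q h
    cases q with
    | nil => rfl
    | cons h' q' =>
      exfalso
      rw [Walk.support_nil, Walk.support_cons] at h
      have := congrArg List.length h
      simp only [List.length_cons, List.length_singleton] at this
      have := q'.support_ne_nil
      cases hq : q'.support with
      | nil => exact this hq
      | cons y l => rw [hq] at h; simp at h
  | @cons _ c _ hadj p' ih =>
    intro q h
    cases q with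
    | nil =>
      exfalso
      rw [Walk.support_nil, Walk.support_cons] at h
      cases hp : p'.support with
      | nil => exact p'.support_ne_nil hp
      | cons y l => rw [hp] at h; simp at h
    | @cons _ c' _ hadj' q' =>
      rw [Walk.support_cons, Walk.support_cons, List.cons.injEq] at h
      obtain ⟨-, h2⟩ := h
      have e1 : p'.support.head? = some c := by rw [Walk.support_eq_cons p']; rfl
      have e2 : q'.support.head? = some c' := by rw [Walk.support_eq_cons q']; rfl
      rw [h2] at e1
      have hww : c = c' := by
        have := e1.symm.trans e2
        simpa using this
      subst hww
      rw [ih q' h2]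

/-- Decompose a cycle through a dart at its base point. -/
lemma cycle_decomp {G : SimpleGraph V} {y z : V} (hyz : G.Adj y z) (w₂ : G.Walk y y)
    (hw₂ : w₂.IsCycle) (hd : (⟨(y, z), hyz⟩ : G.Dart) ∈ w₂.darts) :
    ∃ q : G.Walk z y, q.IsPath ∧ (Walk.cons hyz q).toSubgraph = w₂.toSubgraph := by
  cases w₂ with
  | nil => exact absurd rfl hw₂.ne_nil
  | cons hb q =>
    rename_i b
    rw [Walk.darts_cons, List.mem_cons] at hd
    rcases hd with hd | hd
    · have hb2 : b = z := by
        have := congrArg (fun d : G.Dart => d.toProd.2) hd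
        simpa using this.symm
      subst hb2
      have hq : q.IsPath := ((Walk.cons_isCycle_iff q hb).mp hw₂).1
      exact ⟨q, hq, rfl⟩
    · exfalso
      have hq : q.IsPath := ((Walk.cons_isCycle_iff q hb).mp hw₂).1
      have hymem : y ∈ q.support.dropLast := by
        rw [← Walk.map_fst_darts]
        exact List.mem_map_of_mem (f := fun (d : G.Dart) => d.fst) hd
      have hsupp : q.support.dropLast ++ [y] = q.support := by
        have hne : q.support ≠ [] := q.support_ne_nil
        have := List.dropLast_append_getLast hne
        rwa [Walk.getLast_support] at this
      have hnd : q.support.Nodup := hq.support_nodup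
      rw [← hsupp] at hnd
      exact (List.disjoint_of_nodup_append hnd) hymem (by simp)

/-- Extraction: a cycle subgraph through the edge `x₁x₂` comes from a path `x₂ → x₁`. -/
lemma exists_path {G : SimpleGraph V} {x₁ x₂ : V} (hadj : G.Adj x₁ x₂) (H : G.Subgraph)
    (hH : ∃ (u : V) (w : G.Walk u u), w.IsCycle ∧ w.toSubgraph = H) (hA : H.Adj x₁ x₂) :
    ∃ p : G.Walk x₂ x₁, p.IsPath ∧ (Walk.cons hadj p).toSubgraph = H := by
  classical
  obtain ⟨u, w, hw, rfl⟩ := hH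
  have hx₁ : x₁ ∈ w.support := (Walk.mem_verts_toSubgraph w).mp hA.fst_mem
  have hx₂ : x₂ ∈ w.support := (Walk.mem_verts_toSubgraph w).mp hA.snd_mem
  -- find the dart orientation
  have hedge : s(x₁, x₂) ∈ w.edges := by
    have : s(x₁, x₂) ∈ w.toSubgraph.edgeSet := hA
    exact (Walk.mem_edges_toSubgraph w).mp this
  rw [Walk.edges, List.mem_map] at hedge
  obtain ⟨d, hd, hde⟩ := hedge
  have hcases : (d.fst = x₁ ∧ d.snd = x₂) ∨ (d.fst = x₂ ∧ d.snd = x₁) := by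
    have : s(d.fst, d.snd) = s(x₁, x₂) := hde
    rwa [Sym2.eq_iff] at this
  rcases hcases with ⟨h1, h2⟩ | ⟨h1, h2⟩
  · -- dart x₁ → x₂ present; rotate at x₁
    set w₁ := w.rotate _ hx₁ with hw₁def
    have hw₁ : w₁.IsCycle := hw.rotate hx₁
    have hts : w₁.toSubgraph = w.toSubgraph := w.toSubgraph_rotate hx₁
    have hdeq : d = (⟨(x₁, x₂), hadj⟩ : G.Dart) := by
      apply SimpleGraph.Dart.ext
      rw [Prod.ext_iff]
      exact ⟨h1, h2⟩
    have hd₁ : (⟨(x₁, x₂), hadj⟩ : G.Dart) ∈ w₁.darts :=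
      (w.rotate_darts _ hx₁).mem_iff.mpr (hdeq ▸ hd)
    obtain ⟨p, hp, hps⟩ := cycle_decomp hadj w₁ hw₁ hd₁
    exact ⟨p, hp, by rw [hps, hts]⟩
  · -- dart x₂ → x₁ present; rotate at x₂ and reverse the tail path
    set w₂ := w.rotate _ hx₂ with hw₂def
    have hw₂ : w₂.IsCycle := hw.rotate hx₂
    have hts : w₂.toSubgraph = w.toSubgraph := w.toSubgraph_rotate hx₂
    have hdeq : d = (⟨(x₂, x₁), hadj.symm⟩ : G.Dart) := by
      apply SimpleGraph.Dart.ext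
      rw [Prod.ext_iff]
      exact ⟨h1, h2⟩
    have hd₂ : (⟨(x₂, x₁), hadj.symm⟩ : G.Dart) ∈ w₂.darts :=
      (w.rotate_darts _ hx₂).mem_iff.mpr (hdeq ▸ hd)
    obtain ⟨q, hq, hqs⟩ := cycle_decomp hadj.symm w₂ hw₂ hd₂
    refine ⟨q.reverse, hq.reverse, ?_⟩
    have : (Walk.cons hadj q.reverse).toSubgraph
        = G.subgraphOfAdj hadj ⊔ q.reverse.toSubgraph := rfl
    rw [this, Walk.toSubgraph_reverse]
    have h' : (Walk.cons hadj.symm q).toSubgraph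
        = G.subgraphOfAdj hadj.symm ⊔ q.toSubgraph := rfl
    rw [h', subgraphOfAdj_symm hadj] at hqs
    rw [hqs, hts]


open scoped Classical in
/-- Every cycle subgraph through the edge gives a good list in `TT`. -/
lemma exists_good_list {G : SimpleGraph V} {x₁ x₂ : V} (hadj : G.Adj x₁ x₂) (H : G.Subgraph)
    (hH : ∃ (u : V) (w : G.Walk u u), w.IsCycle ∧ w.toSubgraph = H) (hA : H.Adj x₁ x₂) :
    ∃ L : List V, L ∈ TT G x₁ (Fintype.card V) (Finset.univ \ {x₁, x₂}) x₂ ∧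
      ∃ p : G.Walk x₂ x₁, p.support = (x₂ :: L) ++ [x₁] ∧ (Walk.cons hadj p).toSubgraph = H := by
  obtain ⟨p, hp, hps⟩ := exists_path hadj H hH hA
  have h0 : p.support = x₂ :: p.support.tail := Walk.support_eq_cons p
  have hgl : p.support.getLast? = some x₁ := by
    rw [List.getLast?_eq_getLast_of_ne_nil p.support_ne_nil, p.getLast_support]
  have htne : p.support.tail ≠ [] := by
    intro h
    rw [h] at h0
    rw [h0] at hgl
    simp only [List.getLast?_singleton, Option.some.injEq] at hgl
    exact hadj.ne hgl.symm
  set L := p.support.tail.dropLast with hL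
  have hdec0 : p.support = (x₂ :: L) ++ [p.support.tail.getLast htne] := by
    conv_lhs => rw [h0, ← List.dropLast_append_getLast htne]
    rfl
  have hg : p.support.tail.getLast htne = x₁ := by
    rw [hdec0, List.getLast?_concat] at hgl
    exact Option.some.inj hgl
  rw [hg] at hdec0
  -- properties of L
  have hchain : ((x₂ :: L) ++ [x₁]).Chain' G.Adj := by
    rw [← hdec0]; exact p.isChain_adj_support
  obtain ⟨hc1, -, hc3⟩ := List.isChain_append.mp hchain
  have h4 : G.Adj ((x₂ :: L).getLast (List.cons_ne_nil _ _)) x₁ := by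
    apply hc3
    · exact (List.getLast?_eq_getLast_of_ne_nil (List.cons_ne_nil _ _)).symm ▸ rfl
    · rfl
  have hnd : ((x₂ :: L) ++ [x₁]).Nodup := by
    rw [← hdec0]; exact hp.support_nodup
  have hnd1 : (x₂ :: L).Nodup := (List.nodup_append.mp hnd).1
  have hdisj : ∀ x ∈ (x₂ :: L), x ∉ [x₁] := fun x hx hx' => (List.disjoint_of_nodup_append hnd) hx hx'
  have hLnd : L.Nodup := (List.nodup_cons.mp hnd1).2
  have hx₂L : x₂ ∉ L := (List.nodup_cons.mp hnd1).1
  have hmemS : ∀ x ∈ L, x ∈ Finset.univ \ ({x₁, x₂} : Finset V) := by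
    intro x hx
    refine Finset.mem_sdiff.mpr ⟨Finset.mem_univ _, ?_⟩
    intro hmem
    rcases Finset.mem_insert.mp hmem with rfl | h1
    · exact hdisj x (by simp [hx]) (by simp)
    · rw [Finset.mem_singleton] at h1
      subst h1
      exact hx₂L hx
  refine ⟨L, ?_, p, hdec0, hps⟩
  apply mem_TT G x₁ _ _ _ _ hc1 hLnd hmemS h4
  exact hLnd.length_le_card

end Stmt17Aux

open Stmt17Aux in
theorem stmt_17 (n : ℕ) (hne : Even n) (hn : 12 ≤ n) {V : Type} [Fintype V]
    (G : SimpleGraph V) (hcard : Fintype.card V = n)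
    (htf : G.CliqueFree 3) (x₁ x₂ : V) (hadj : G.Adj x₁ x₂) :
    (cycleCountThroughEdge G x₁ x₂ : ℝ) ≤ 2.44 * (((n - 2) / 2).factorial : ℝ) ^ 2 := by
  classical
  obtain ⟨t, ht⟩ := hne
  set m : ℕ := (n - 2) / 2 with hm
  obtain ⟨k, hk⟩ : ∃ k, m = k + 3 := ⟨m - 3, by omega⟩
  set S : Finset V := Finset.univ \ {x₁, x₂} with hSdef
  have hScard : S.card = 2 * m := by
    rw [hSdef, Finset.card_sdiff_of_subset (Finset.subset_univ _), Finset.card_pair hadj.ne,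
      Finset.card_univ, hcard]
    omega
  -- counting bound through TT
  have hcount : cycleCountThroughEdge G x₁ x₂ ≤ (TT G x₁ (Fintype.card V) S x₂).card := by
    have hrep : ∀ H : {H : G.Subgraph //
        (∃ (u : V) (w : G.Walk u u), w.IsCycle ∧ w.toSubgraph = H) ∧ H.Adj x₁ x₂},
        ∃ L : List V, L ∈ TT G x₁ (Fintype.card V) S x₂ ∧
          ∃ p : G.Walk x₂ x₁, p.support = (x₂ :: L) ++ [x₁] ∧
            (Walk.cons hadj p).toSubgraph = H.1 :=
      fun H => exists_good_list hadj H.1 H.2.1 H.2.2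
    choose fL hfmem hfspec using hrep
    have hinj : Function.Injective
        (fun H : {H : G.Subgraph //
          (∃ (u : V) (w : G.Walk u u), w.IsCycle ∧ w.toSubgraph = H) ∧ H.Adj x₁ x₂} =>
          (⟨fL H, hfmem H⟩ : {L : List V // L ∈ TT G x₁ (Fintype.card V) S x₂})) := by
      intro H₁ H₂ hEq
      have hLeq : fL H₁ = fL H₂ := congrArg Subtype.val hEq
      obtain ⟨p₁, hp₁s, hp₁t⟩ := hfspec H₁
      obtain ⟨p₂, hp₂s, hp₂t⟩ := hfspec H₂
      have hpp : p₁ = p₂ := by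
        apply walk_eq_of_support_eq
        rw [hp₁s, hp₂s, hLeq]
      apply Subtype.ext
      rw [← hp₁t, ← hp₂t, hpp]
    calc cycleCountThroughEdge G x₁ x₂
        ≤ Nat.card {L : List V // L ∈ TT G x₁ (Fintype.card V) S x₂} :=
          Nat.card_le_card_of_injective _ hinj
      _ = (TT G x₁ (Fintype.card V) S x₂).card := Nat.card_eq_finsetCard _
  have hTT : (TT G x₁ (Fintype.card V) S x₂).card ≤ Q m := by
    have h1 := card_TT_le G x₁ htf (Fintype.card V) S x₂
    rw [if_pos hadj.symm] at h1
    calc (TT G x₁ (Fintype.card V) S x₂).card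
        ≤ phi1 S.card (S.filter (fun u => G.Adj x₂ u)).card := h1
      _ ≤ phi1 S.card S.card := phi1_mono (Finset.card_filter_le _ _)
      _ = Q m := by
          rw [hScard, hk]
          exact phi1_top k
  have hfinal : 100 * cycleCountThroughEdge G x₁ x₂ ≤ 244 * (Nat.factorial m) ^ 2 := by
    have := Q_le m (by omega)
    omega
  have hcast : (cycleCountThroughEdge G x₁ x₂ : ℝ) ≤ (244 / 100 : ℝ) * (Nat.factorial m : ℝ) ^ 2 := by
    have h100 : (0:ℝ) < 100 := by norm_num
    rw [div_mul_eq_mul_div, le_div_iff₀ h100]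
    calc (cycleCountThroughEdge G x₁ x₂ : ℝ) * 100
        = ((100 * cycleCountThroughEdge G x₁ x₂ : ℕ) : ℝ) := by push_cast; ring
      _ ≤ ((244 * (Nat.factorial m) ^ 2 : ℕ) : ℝ) := by exact_mod_cast hfinal
      _ = 244 * (Nat.factorial m : ℝ) ^ 2 := by push_cast; ring
  calc (cycleCountThroughEdge G x₁ x₂ : ℝ)
      ≤ (244 / 100 : ℝ) * (Nat.factorial m : ℝ) ^ 2 := hcast
    _ = 2.44 * (((n - 2) / 2).factorial : ℝ) ^ 2 := by rw [hm]; norm_num
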